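/- Let f : ℝ² → (0,∞) be locally integrable, and suppose that for every ν ∈ S¹ and every line l parallel to ν, the restriction of f to l has the property that f^{1/(n−1)} is concave (for a fixed n ≥ 2). Suppose also f is continuous. If f is bounded above on two open balls B_r(x₀) and B_r(x₁) with values ≤ A on B_r(x₀) and ≥ i on B_r(x₁) on sets of positive measure, and both balls lie in a compact subset K of an open convex set U with dist(K,∂U) ≥ δ, then i is bounded by a constant depending only on A, r, δ, n and diam(K). -/

import Mathlib

open MeasureTheory Metric

/-- quantitative L∞ bound for densities whose restrictions to all lines have
concave `(1/(n-1))`-th power. If a continuous positive `f : ℝ² → (0,∞)`, whose restriction to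
every line has concave `(1/(n-1))`-th power on the (convex) portion of the line inside an open
convex set `U`, satisfies `f ≤ A` on a set of positive measure in a ball `B_r(x₀)` and
`f ≥ i` on a set of positive measure in a ball `B_r(x₁)`, with both balls inside a compact
`K ⊆ U` with `dist(K,∂U) ≥ δ` and `diam K ≤ D`, then `i ≤ B` for a constant `B` depending
only on `A, r, δ, n, D`. -/
theorem stmt_9 (n : ℕ) (hn : 2 ≤ n) (A r δ D : ℝ) (hA : 0 < A) (hr : 0 < r) (hδ : 0 < δ)
    (hD : 0 < D) :
    ∃ B : ℝ, ∀ (U K : Set (ℝ × ℝ)) (f : ℝ × ℝ → ℝ) (x₀ x₁ : ℝ × ℝ) (i : ℝ),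
      IsOpen U → Convex ℝ U → IsCompact K → K ⊆ U → Metric.diam K ≤ D →
      (∀ x ∈ K, ∀ y ∉ U, δ ≤ dist x y) →
      Continuous f → (∀ x, 0 < f x) →
      (∀ v w : ℝ × ℝ,
        ConcaveOn ℝ {t : ℝ | v + t • w ∈ U} (fun t => f (v + t • w) ^ ((1:ℝ) / (n - 1)))) →
      ball x₀ r ⊆ K → ball x₁ r ⊆ K →
      0 < volume {x ∈ ball x₀ r | f x ≤ A} →
      0 < volume {x ∈ ball x₁ r | i ≤ f x} →
      i ≤ B := by
  have hc : (1:ℝ) ≤ (n:ℝ) - 1 := by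
    have : (2:ℝ) ≤ (n:ℝ) := by exact_mod_cast hn
    linarith
  have hc0 : (0:ℝ) < (n:ℝ) - 1 := lt_of_lt_of_le one_pos hc
  have hbase : (1:ℝ) ≤ 1 + 2*D/δ := by
    have : 0 ≤ 2*D/δ := by positivity
    linarith
  have hBge : A ≤ A * (1 + 2*D/δ) ^ ((n:ℝ)-1) := by
    nth_rewrite 1 [← mul_one A]
    apply mul_le_mul_of_nonneg_left _ hA.le
    calc (1:ℝ) = 1 ^ ((n:ℝ)-1) := (Real.one_rpow _).symm
    _ ≤ (1 + 2*D/δ) ^ ((n:ℝ)-1) := Real.rpow_le_rpow zero_le_one hbase hc0.le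
  refine ⟨A * (1 + 2*D/δ) ^ ((n:ℝ)-1), ?_⟩
  intro U K f x₀ x₁ i hU hUconv hK hKU hdiam hdist hf hfpos hconc hb0 hb1 hv0 hv1
  obtain ⟨y₀, hy₀b, hy₀A⟩ := nonempty_of_measure_ne_zero hv0.ne'
  obtain ⟨y₁, hy₁b, hy₁i⟩ := nonempty_of_measure_ne_zero hv1.ne'
  have hy₀K : y₀ ∈ K := hb0 hy₀b
  have hy₁K : y₁ ∈ K := hb1 hy₁b
  rcases le_or_gt i A with h | hiA
  · exact h.trans hBge
  have hi0 : 0 < i := hA.trans hiA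
  set w : ℝ × ℝ := y₁ - y₀ with hwdef
  rcases eq_or_ne w 0 with hw0 | hw0
  · have hyy : y₁ = y₀ := sub_eq_zero.mp hw0
    exact absurd (hy₁i.trans (hyy ▸ hy₀A)) (not_le.mpr hiA)
  have hnw : (0:ℝ) < ‖w‖ := norm_pos_iff.mpr hw0
  have hnwD : ‖w‖ ≤ D := by
    have h1 : dist y₁ y₀ ≤ Metric.diam K := dist_le_diam_of_mem hK.isBounded hy₁K hy₀K
    rw [dist_eq_norm] at h1
    exact h1.trans hdiam
  set s : ℝ := δ / (2 * ‖w‖) with hsdef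
  have hs0 : 0 < s := by positivity
  have h1U : y₀ + (1:ℝ) • w ∈ U := by
    have he : y₀ + (1:ℝ) • w = y₁ := by rw [one_smul, hwdef]; abel
    rw [he]; exact hKU hy₁K
  have haU : y₀ + (-s) • w ∈ U := by
    by_contra hp
    have h2 := hdist y₀ hy₀K _ hp
    rw [dist_eq_norm] at h2
    have he : y₀ - (y₀ + (-s) • w) = s • w := by module
    rw [he, norm_smul] at h2
    simp only [Real.norm_eq_abs, abs_of_pos hs0] at h2
    rw [hsdef] at h2
    have he2 : δ / (2 * ‖w‖) * ‖w‖ = δ / 2 := by field_simp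
    rw [he2] at h2
    linarith
  have hmema : (-s) ∈ {t : ℝ | y₀ + t • w ∈ U} := haU
  have hmem1 : (1:ℝ) ∈ {t : ℝ | y₀ + t • w ∈ U} := h1U
  have hcv := (hconc y₀ w).2 hmema hmem1
    (show (0:ℝ) ≤ 1/(1+s) by positivity) (show (0:ℝ) ≤ s/(1+s) by positivity)
    (show 1/(1+s) + s/(1+s) = 1 by field_simp)
  have harg : (1/(1+s)) • (-s) + (s/(1+s)) • (1:ℝ) = 0 := by simp only [smul_eq_mul]; field_simp; ring
  rw [harg] at hcv
  simp only [smul_eq_mul] at hcv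
  have hz : y₀ + (0:ℝ) • w = y₀ := by simp
  rw [hz] at hcv
  have hy1eq : y₀ + (1:ℝ) • w = y₁ := by rw [one_smul, hwdef]; abel
  rw [hy1eq] at hcv
  set e : ℝ := (1:ℝ)/((n:ℝ)-1) with hedef
  have he0 : 0 < e := by positivity
  have hganeg : 0 ≤ f (y₀ + (-s) • w) ^ e := Real.rpow_nonneg (hfpos _).le _
  -- g(1) ≤ g(0) * (1+s)/s
  have hg1 : f y₁ ^ e ≤ f y₀ ^ e * ((1+s)/s) := by
    have h4 : s/(1+s) * (f y₁ ^ e) ≤ f y₀ ^ e := by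
      nlinarith [mul_nonneg (by positivity : (0:ℝ) ≤ 1/(1+s)) hganeg]
    have h6 := mul_le_mul_of_nonneg_right h4 (by linarith : (0:ℝ) ≤ 1+s)
    have h7 : s/(1+s) * f y₁ ^ e * (1+s) = f y₁ ^ e * s := by field_simp
    rw [h7] at h6
    rw [← mul_div_assoc]
    exact (le_div_iff₀ hs0).mpr h6
  have hfy0 : f y₀ ^ e ≤ A ^ e := Real.rpow_le_rpow (hfpos _).le hy₀A he0.le
  have hfrac : (1+s)/s ≤ 1 + 2*D/δ := by
    rw [div_le_iff₀ hs0]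
    have h2 : s * (2*‖w‖/δ) = 1 := by rw [hsdef]; field_simp
    have h1 : s * (2*‖w‖/δ) ≤ s * (2*D/δ) := by
      apply mul_le_mul_of_nonneg_left _ hs0.le
      gcongr
    nlinarith
  have key : f y₁ ^ e ≤ A ^ e * (1 + 2*D/δ) :=
    hg1.trans (mul_le_mul hfy0 hfrac (by positivity) (Real.rpow_nonneg hA.le _))
  have hie : i ^ e ≤ A ^ e * (1 + 2*D/δ) :=
    (Real.rpow_le_rpow hi0.le hy₁i he0.le).trans key
  have hec : e * ((n:ℝ)-1) = 1 := by rw [hedef]; field_simp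
  calc i = (i ^ e) ^ ((n:ℝ)-1) := by
        rw [← Real.rpow_mul hi0.le, hec, Real.rpow_one]
  _ ≤ (A ^ e * (1 + 2*D/δ)) ^ ((n:ℝ)-1) :=
        Real.rpow_le_rpow (Real.rpow_nonneg hi0.le _) hie hc0.le
  _ = (A ^ e) ^ ((n:ℝ)-1) * (1 + 2*D/δ) ^ ((n:ℝ)-1) :=
        Real.mul_rpow (Real.rpow_nonneg hA.le _) (by linarith)
  _ = A * (1 + 2*D/δ) ^ ((n:ℝ)-1) := by
        rw [← Real.rpow_mul hA.le, hec, Real.rpow_one]
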